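/- Let m > 0 and define f, h : ℝ → ℝ by f(x) = log(x/(x + m)) and h(x) = x + m·log(x). Then for every x > 0, f''(x)·h'(x) + h''(x)·f'(x) + (2/x)·f'(x)·h'(x) = 0. (Via the identity ∂∂̄f(r²) ∧ ∂∂̄h(r²) = 2r²h'f'(f''/f' + h''/h' + 2/r²)·⋆1, this expresses that the curvature F = ∂∂̄ log χ² of the charge-one abelian instanton, with χ² = r²/(r² + m), satisfies F ∧ Ω = 0 for the Burns Kähler form Ω = −(i/2)∂∂̄(r² + m log r²), i.e. F is anti-self-dual with respect to the Burns metric.) -/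

import Mathlib

section
variable (m : ℝ)

lemma hf_deriv (hm : 0 < m) (x : ℝ) (hx : 0 < x) :
    HasDerivAt (fun y : ℝ => Real.log (y / (y + m))) (1/x - 1/(x+m)) x := by
  have hxm : 0 < x + m := by linarith
  have h1 : (fun y : ℝ => Real.log (y / (y + m))) =ᶠ[nhds x]
      fun y => Real.log y - Real.log (y + m) := by
    filter_upwards [eventually_gt_nhds hx] with y hy
    rw [Real.log_div hy.ne' (by linarith : y + m > 0).ne']
  have h2 : HasDerivAt (fun y : ℝ => Real.log y - Real.log (y + m)) (1/x - 1/(x+m)) x := by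
    have ha := Real.hasDerivAt_log hx.ne'
    have hb : HasDerivAt (fun y : ℝ => Real.log (y + m)) (1/(x+m)) x := by
      have := (Real.hasDerivAt_log hxm.ne').comp x ((hasDerivAt_id x).add_const m)
      exact this.congr_deriv (by simp [one_div])
    exact (ha.sub hb).congr_deriv (by simp [one_div])
  exact h2.congr_of_eventuallyEq h1

lemma hh_deriv (x : ℝ) (hx : 0 < x) :
    HasDerivAt (fun y : ℝ => y + m * Real.log y) (1 + m * (1/x)) x := by
  have := (hasDerivAt_id x).add ((Real.hasDerivAt_log hx.ne').const_mul m)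
  exact this.congr_deriv (by simp [one_div])

end

theorem burns_antiselfdual_ode (m : ℝ) (hm : 0 < m) :
    ∀ x : ℝ, 0 < x →
      deriv (deriv (fun y : ℝ => Real.log (y / (y + m)))) x *
          deriv (fun y : ℝ => y + m * Real.log y) x +
        deriv (deriv (fun y : ℝ => y + m * Real.log y)) x *
          deriv (fun y : ℝ => Real.log (y / (y + m))) x +
        (2 / x) * deriv (fun y : ℝ => Real.log (y / (y + m))) x *
          deriv (fun y : ℝ => y + m * Real.log y) x = 0 := by
  intro x hx
  have hxm : 0 < x + m := by linarith
  -- first derivatives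
  have df : deriv (fun y : ℝ => Real.log (y / (y + m))) x = 1/x - 1/(x+m) :=
    (hf_deriv m hm x hx).deriv
  have dh : deriv (fun y : ℝ => y + m * Real.log y) x = 1 + m * (1/x) :=
    (hh_deriv m x hx).deriv
  -- second derivatives
  have ef : deriv (fun y : ℝ => Real.log (y / (y + m))) =ᶠ[nhds x]
      fun y => 1/y - 1/(y+m) := by
    filter_upwards [eventually_gt_nhds hx] with y hy
    exact (hf_deriv m hm y hy).deriv
  have eh : deriv (fun y : ℝ => y + m * Real.log y) =ᶠ[nhds x]
      fun y => 1 + m * (1/y) := by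
    filter_upwards [eventually_gt_nhds hx] with y hy
    exact (hh_deriv m y hy).deriv
  have d2f : deriv (deriv (fun y : ℝ => Real.log (y / (y + m)))) x
      = -(1/x^2) + 1/(x+m)^2 := by
    rw [ef.deriv_eq]
    have h1 : HasDerivAt (fun y : ℝ => 1/y - 1/(y+m)) (-(1/x^2) + 1/(x+m)^2) x := by
      have ha := hasDerivAt_inv hx.ne'
      have hb : HasDerivAt (fun y : ℝ => (y+m)⁻¹) (-((x+m)^2)⁻¹) x := by
        have := (hasDerivAt_inv hxm.ne').comp x ((hasDerivAt_id x).add_const m)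
        exact this.congr_deriv (by simp)
      have := ha.sub hb
      have e : (fun y : ℝ => 1/y - 1/(y+m)) = fun y => y⁻¹ - (y+m)⁻¹ := by
        funext y; simp [one_div]
      rw [e]
      exact this.congr_deriv (by ring)
    exact h1.deriv
  have d2h : deriv (deriv (fun y : ℝ => y + m * Real.log y)) x = m * (-(1/x^2)) := by
    rw [eh.deriv_eq]
    have h1 : HasDerivAt (fun y : ℝ => 1 + m * (1/y)) (m * (-(1/x^2))) x := by
      have := ((hasDerivAt_inv hx.ne').const_mul m).const_add 1
      simpa [one_div] using this
    exact h1.deriv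
  rw [df, dh, d2f, d2h]
  field_simp
  ring
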